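/- Let G be a split semisimple linear algebraic group over k with Borel subgroup B and split maximal torus T ⊆ B, let E be a generic G-torsor over k with respect to the essential B-equivariant pretheory CH_B of equivariant Chow groups, and let E/B be the twisted form of G/B by E. Then the ring ĥ_B(E) = CH(G/B) ⊗_{Image(res)} Z, the quotient of CH(G/B) by the ideal generated by non-constant elements of the image of the restriction map res : CH(E/B) → CH(G/B), is isomorphic to the Chow ring CH(G) of G. Moreover, for an arbitrary G-torsor E one has ĥ_B(E) ⊗_Z Q ≅ Q. -/

import Mathlib

/-!
# Statement 15

Let `G` be a split semisimple linear algebraic group over `k` with Borel subgroup `B`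
and split maximal torus `T ⊆ B`, let `E` be a generic `G`-torsor over `k` with respect
to the essential `B`-equivariant pretheory `CH_B` of equivariant Chow groups, and let
`E/B` be the twisted form of `G/B` by `E`.  Then the ring
`ĥ_B(E) = CH(G/B) ⊗_{Image(res)} ℤ` — the quotient of `CH(G/B)` by the ideal generated
by the non-constant elements of the image of the restriction map
`res : CH(E/B) → CH(G/B)` — is isomorphic to the Chow ring `CH(G)` of `G`.  Moreover,
for an arbitrary `G`-torsor `E` one has `ĥ_B(E) ⊗_ℤ ℚ ≅ ℚ`.

Using the identifications of the example "Chow groups and the J-invariant" of the paper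
we work with: the ring `R = CH(G/B) ≅ h̄_B(G_K)`; the ring `A = CH(E/B) = h_B(E)` with
the restriction map `res = (ψ_E)*_B : A → R`; `h_B(pt) = S(T*)`, the symmetric algebra
of the character lattice, formalized as `MvPolynomial (Fin n) ℤ` on the basis
`χ_1, …, χ_n` of `T*`, with the characteristic map `c = φ*_B : S(T*) → CH(G/B)` of
Demazure sending `χ_i` to the first Chern class `x i = c_1(L_{G/B}(χ_i))`; the
augmentations `ε : A → ℤ = CH(pt) = h̄_B(B_K)` and `augR : R → ℤ`; and `CHG = CH(G)`,
with `CH(G) ≅ CH(G/B)/(c_1(L_{G/B}(χ_1)), …, c_1(L_{G/B}(χ_n)))` (hypothesis `hCHG`,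
from Proposition 5.1 / Corollary 5.3).  The ring `ĥ_B(E)` is the tensor product
`R ⊗[A] ℤ` (`R` an `A`-algebra via `res`, `ℤ` via `ε`).  The main theorem gives
`Image(c) ⊆ Image(res)` (hypothesis `hmain`); genericity of `E` means
`Image(c) = Image(res)`; and the image of the characteristic map has finite index in
`CH(G/B)` measured by the torsion index `τ` of `G` (hypothesis `hτ`), which yields the
rational statement.
-/

open scoped TensorProduct

/-- example "Chow groups and the J-invariant" of Gille–Zainoulline:
for a generic `G`-torsor `E`, the ring
`ĥ_B(E) = CH(G/B) ⊗_{Image(res)} ℤ = R ⊗[A] ℤ` is the quotient of `CH(G/B)` by the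
ideal generated by the non-constant (augmentation-trivial) elements of `Image(res)` and
is isomorphic to `CH(G)`; for an arbitrary `G`-torsor, `ĥ_B(E) ⊗_ℤ ℚ ≅ ℚ`. -/
theorem hat_CH_of_generic_torsor_iso_CH_of_G
    -- `R = CH(G/B)`, `A = CH(E/B)` and `CHG = CH(G)`
    (R A CHG : Type*) [CommRing R] [CommRing A] [CommRing CHG]
    -- the restriction map `res : CH(E/B) → CH(G/B)`, i.e. the canonical map `(ψ_E)*_B`
    (res : A →+* R)
    -- the rank `n` of `G` and the first Chern classes `x i = c_1(L_{G/B}(χ_i))`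
    (n : ℕ) (x : Fin n → R)
    -- the characteristic map `c : S(T*) = ℤ[χ_1, …, χ_n] → CH(G/B)`, with
    -- `c(χ_i) = c_1(L_{G/B}(χ_i))`
    (c : MvPolynomial (Fin n) ℤ →+* R)
    (hc : ∀ i : Fin n, c (MvPolynomial.X i) = x i)
    -- the augmentation `ε : CH(E/B) → ℤ = CH(pt) = h̄_B(B_K)` and the augmentation
    -- (degree-zero part) `augR : CH(G/B) → ℤ`, compatibly
    (ε : A →+* ℤ) (augR : R →+* ℤ)
    (haug : augR.comp res = ε)
    -- the Chern classes are augmentation-trivial (they live in degree `1`)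
    (hx : ∀ i : Fin n, augR (x i) = 0)
    -- the main theorem (Theorem 4.4): `Image(c) ⊆ Image(res)`, i.e. the characteristic
    -- subring consists of rational cycles
    (hmain : Set.range ⇑c ⊆ Set.range ⇑res)
    -- the image of the characteristic map is a subgroup of finite index in `CH(G/B)`,
    -- measured by the torsion index `τ` of `G`
    (τ : ℕ) (hτpos : 0 < τ)
    (hτ : ∀ r : R, ∃ a : MvPolynomial (Fin n) ℤ, c a = (τ : ℤ) • r)
    -- Proposition 5.1/Corollary 5.3 for Chow groups:
    -- `CH(G) ≅ CH(G/B)/(c_1(L_{G/B}(χ_1)), …, c_1(L_{G/B}(χ_n)))`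
    (hCHG : Nonempty (CHG ≃+* R ⧸ Ideal.span (Set.range x)))
    -- the `A = CH(E/B)`-algebra structures on `R = CH(G/B)` (via `res`) and on
    -- `ℤ = CH(pt)` (via `ε`), defining `ĥ_B(E) = R ⊗[A] ℤ`
    [Algebra A R] [Algebra A ℤ]
    (halg₁ : algebraMap A R = res)
    (halg₂ : algebraMap A ℤ = ε) :
    -- `ĥ_B(E)` is the quotient of `CH(G/B)` by the ideal generated by the non-constant
    -- elements of the image of `res` ...
    Nonempty ((R ⊗[A] ℤ) ≃+*
        (R ⧸ Ideal.span {r : R | r ∈ Set.range ⇑res ∧ augR r = 0})) ∧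
    -- ... if `E` is generic, i.e. `Image(c) = Image(res)`, then `ĥ_B(E) ≅ CH(G)` ...
    (Set.range ⇑c = Set.range ⇑res → Nonempty ((R ⊗[A] ℤ) ≃+* CHG)) ∧
    -- ... and for an arbitrary `G`-torsor `E`, `ĥ_B(E) ⊗_ℤ ℚ ≅ ℚ`
    Nonempty ((ℚ ⊗[ℤ] (R ⊗[A] ℤ)) ≃+* ℚ) := by
  classical
  set I : Ideal R := Ideal.span {r : R | r ∈ Set.range ⇑res ∧ augR r = 0} with hIdef
  set J : Ideal R := Ideal.span (Set.range x) with hJdef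
  have haug' : ∀ a : A, augR (res a) = ε a := fun a => DFunLike.congr_fun haug a
  have hcC : ∀ a : ℤ, c (MvPolynomial.C a) = (a : R) := fun a =>
    eq_intCast (c.comp (MvPolynomial.C : ℤ →+* MvPolynomial (Fin n) ℤ)) a
  -- `c p` agrees with its constant term modulo `J`
  have key1 : ∀ p : MvPolynomial (Fin n) ℤ,
      c p - ((MvPolynomial.constantCoeff p : ℤ) : R) ∈ J := by
    intro p
    induction p using MvPolynomial.induction_on with
    | C a => simp [hcC a]
    | add p q hp hq =>
        have h := J.add_mem hp hq
        rw [sub_add_sub_comm] at h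
        simpa [map_add] using h
    | mul_X p i hp =>
        have hxJ : x i ∈ J := Ideal.subset_span ⟨i, rfl⟩
        simpa [map_mul, hc i] using J.mul_mem_left (c p) hxJ
  have hJker : ∀ r ∈ J, augR r = 0 := by
    intro r hr
    have hle : J ≤ RingHom.ker augR := by
      rw [hJdef, Ideal.span_le]
      rintro _ ⟨i, rfl⟩
      exact hx i
    exact hle hr
  have haugc : ∀ p : MvPolynomial (Fin n) ℤ,
      augR (c p) = MvPolynomial.constantCoeff p := by
    intro p
    have h0 := hJker _ (key1 p)
    rw [map_sub, map_intCast, sub_eq_zero] at h0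
    exact h0
  have hIker : ∀ r ∈ I, augR r = 0 := by
    intro r hr
    have hle : I ≤ RingHom.ker augR := by
      rw [hIdef, Ideal.span_le]
      rintro r ⟨-, h0⟩
      exact h0
    exact hle hr
  -- constant-term-free elements of the image of `c` lie in `I`
  have hcI : ∀ p : MvPolynomial (Fin n) ℤ,
      MvPolynomial.constantCoeff p = 0 → c p ∈ I := by
    intro p h0
    exact Ideal.subset_span ⟨hmain ⟨p, rfl⟩, by rw [haugc p, h0]⟩
  -- `res a` agrees with `ε a` modulo `I`
  have hresI : ∀ a : A, res a - ((ε a : ℤ) : R) ∈ I := by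
    intro a
    refine Ideal.subset_span ⟨⟨a - ((ε a : ℤ) : A), ?_⟩, ?_⟩
    · rw [map_sub, map_intCast]
    · rw [map_sub, map_intCast, haug' a, Int.cast_id, sub_self]
  have hmkres : ∀ a : A,
      Ideal.Quotient.mk I (res a) = ((ε a : ℤ) : R ⧸ I) := by
    intro a
    have hcast : ((ε a : ℤ) : R ⧸ I) = Ideal.Quotient.mk I ((ε a : ℤ) : R) :=
      (map_intCast (Ideal.Quotient.mk I) (ε a)).symm
    rw [hcast, Ideal.Quotient.eq]
    exact hresI a
  -- the forward map `R ⊗[A] ℤ → R ⧸ I`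
  have halgQ : ∀ a : A,
      algebraMap A (R ⧸ I) a = Ideal.Quotient.mk I (res a) := by
    intro a
    rw [← halg₁]
    rfl
  let f₂ : ℤ →ₐ[A] R ⧸ I :=
    { toRingHom := Int.castRingHom (R ⧸ I)
      commutes' := by
        intro a
        show ((algebraMap A ℤ a : ℤ) : R ⧸ I) = algebraMap A (R ⧸ I) a
        rw [halg₂, halgQ, hmkres] }
  let f : (R ⊗[A] ℤ) →ₐ[A] R ⧸ I :=
    Algebra.TensorProduct.lift (Ideal.Quotient.mkₐ A I) f₂ fun _ _ => Commute.all _ _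
  have hf_tmul : ∀ (r : R) (m : ℤ),
      f (r ⊗ₜ[A] m) = Ideal.Quotient.mk I r * ((m : ℤ) : R ⧸ I) := fun r m =>
    Algebra.TensorProduct.lift_tmul _ _ _ r m
  -- the backward map `R ⧸ I → R ⊗[A] ℤ`
  have hI_ker : ∀ r ∈ I,
      (Algebra.TensorProduct.includeLeftRingHom : R →+* R ⊗[A] ℤ) r = 0 := by
    intro r hr
    have hle : I ≤ RingHom.ker
        (Algebra.TensorProduct.includeLeftRingHom : R →+* R ⊗[A] ℤ) := by
      rw [hIdef, Ideal.span_le]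
      rintro r ⟨⟨a, rfl⟩, h0⟩
      have hε : ε a = 0 := by rw [← haug' a]; exact h0
      show (res a) ⊗ₜ[A] (1 : ℤ) = 0
      rw [← halg₁]
      calc (algebraMap A R a) ⊗ₜ[A] (1 : ℤ)
          = (a • (1 : R)) ⊗ₜ[A] (1 : ℤ) := by rw [Algebra.algebraMap_eq_smul_one]
        _ = (1 : R) ⊗ₜ[A] (a • (1 : ℤ)) := TensorProduct.smul_tmul a 1 1
        _ = 0 := by
            rw [Algebra.smul_def, halg₂, hε]
            simp
    exact hle hr
  let g : R ⧸ I →+* R ⊗[A] ℤ :=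
    Ideal.Quotient.lift I Algebra.TensorProduct.includeLeftRingHom hI_ker
  have hg_mk : ∀ r : R, g (Ideal.Quotient.mk I r) = r ⊗ₜ[A] (1 : ℤ) := fun r =>
    Ideal.Quotient.lift_mk I _ _
  have hgf : g.comp f.toRingHom = RingHom.id _ := by
    refine RingHom.ext fun t => ?_
    show g (f t) = t
    induction t using TensorProduct.induction_on with
    | zero => simp
    | tmul r m =>
        rw [hf_tmul, map_mul, hg_mk, map_intCast]
        calc (r ⊗ₜ[A] (1 : ℤ)) * ((m : ℤ) : R ⊗[A] ℤ)
            = (m : ℤ) • (r ⊗ₜ[A] (1 : ℤ)) := by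
              rw [zsmul_eq_mul, mul_comm]
          _ = r ⊗ₜ[A] ((m : ℤ) • (1 : ℤ)) := (TensorProduct.tmul_smul m r 1).symm
          _ = r ⊗ₜ[A] m := by rw [smul_eq_mul, mul_one]
    | add u v hu hv => rw [map_add, map_add, hu, hv]
  have hfg : f.toRingHom.comp g = RingHom.id _ := by
    refine RingHom.ext fun t => ?_
    obtain ⟨r, rfl⟩ := Ideal.Quotient.mk_surjective t
    show f (g (Ideal.Quotient.mk I r)) = Ideal.Quotient.mk I r
    rw [hg_mk, hf_tmul]
    simp
  let e1 : (R ⊗[A] ℤ) ≃+* R ⧸ I := RingEquiv.ofRingHom f.toRingHom g hfg hgf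
  refine ⟨⟨e1⟩, ?_, ?_⟩
  · -- generic case
    intro hgen
    have hJI : J ≤ I := by
      rw [hJdef, Ideal.span_le]
      rintro _ ⟨i, rfl⟩
      exact Ideal.subset_span ⟨hmain ⟨MvPolynomial.X i, hc i⟩, hx i⟩
    have hIJ : I ≤ J := by
      rw [hIdef, Ideal.span_le]
      rintro r ⟨hr, h0⟩
      rw [← hgen] at hr
      obtain ⟨p, rfl⟩ := hr
      have hp0 : MvPolynomial.constantCoeff p = 0 := by rw [← haugc p]; exact h0
      have h := key1 p
      rw [hp0] at h
      simpa using h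
    have hIJ' : I = J := le_antisymm hIJ hJI
    exact ⟨e1.trans ((Ideal.quotEquivOfEq hIJ').trans hCHG.some.symm)⟩
  · -- rational statement
    have key2 : ∀ r : R, augR r = 0 → (τ : ℤ) • r ∈ I := by
      intro r h0
      obtain ⟨a, ha⟩ := hτ r
      have h1 : MvPolynomial.constantCoeff a = 0 := by
        rw [← haugc a, ha, map_zsmul, h0, smul_zero]
      have h2 := hcI a h1
      rwa [ha] at h2
    -- the augmentation descends to the quotient
    let augbar : R ⧸ I →+* ℤ := Ideal.Quotient.lift I augR hIker
    have haugbar : ∀ r : R, augbar (Ideal.Quotient.mk I r) = augR r := fun r =>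
      Ideal.Quotient.lift_mk I _ _
    let φ : (ℚ ⊗[ℤ] (R ⧸ I)) →ₐ[ℤ] ℚ :=
      Algebra.TensorProduct.lift (AlgHom.id ℤ ℚ)
        (((Int.castRingHom ℚ).comp augbar).toIntAlgHom) fun _ _ => Commute.all _ _
    have hφ_tmul : ∀ (q : ℚ) (m : R ⧸ I),
        φ (q ⊗ₜ[ℤ] m) = q * ((augbar m : ℤ) : ℚ) := fun q m =>
      Algebra.TensorProduct.lift_tmul _ _ _ q m
    have hτQ : ((τ : ℤ) : ℚ) ≠ 0 := by exact_mod_cast hτpos.ne'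
    -- torsion elements die over `ℚ`
    have hkill : ∀ (q : ℚ) (u : R ⧸ I), (τ : ℤ) • u = 0 → q ⊗ₜ[ℤ] u = 0 := by
      intro q u hu
      have hkey : ((τ : ℤ) : ℚ) * (((τ : ℤ) : ℚ)⁻¹ * q) = q := by
        field_simp
      calc q ⊗ₜ[ℤ] u
          = (((τ : ℤ) : ℚ) * (((τ : ℤ) : ℚ)⁻¹ * q)) ⊗ₜ[ℤ] u := by rw [hkey]
        _ = ((τ : ℤ) • ((((τ : ℤ) : ℚ))⁻¹ * q)) ⊗ₜ[ℤ] u := by rw [zsmul_eq_mul]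
        _ = ((((τ : ℤ) : ℚ))⁻¹ * q) ⊗ₜ[ℤ] ((τ : ℤ) • u) := TensorProduct.smul_tmul _ _ _
        _ = 0 := by rw [hu, TensorProduct.tmul_zero]
    have hψφ : ∀ t : ℚ ⊗[ℤ] (R ⧸ I), (φ t) ⊗ₜ[ℤ] (1 : R ⧸ I) = t := by
      intro t
      induction t using TensorProduct.induction_on with
      | zero => rw [map_zero, TensorProduct.zero_tmul]
      | tmul q m =>
          obtain ⟨r, rfl⟩ := Ideal.Quotient.mk_surjective m
          rw [hφ_tmul, haugbar]
          have h2 : augR (r - ((augR r : ℤ) : R)) = 0 := by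
            rw [map_sub, map_intCast, Int.cast_id, sub_self]
          have h4 : Ideal.Quotient.mk I ((τ : ℤ) • (r - ((augR r : ℤ) : R))) = 0 :=
            (Ideal.Quotient.eq_zero_iff_mem).mpr (key2 _ h2)
          have h1 : (τ : ℤ) • ((Ideal.Quotient.mk I r) - ((augR r : ℤ) : R ⧸ I)) = 0 := by
            simpa [map_zsmul, map_sub, map_intCast] using h4
          have h5 := hkill q _ h1
          rw [TensorProduct.tmul_sub, sub_eq_zero] at h5
          rw [h5]
          calc (q * ((augR r : ℤ) : ℚ)) ⊗ₜ[ℤ] (1 : R ⧸ I)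
              = ((augR r : ℤ) • q) ⊗ₜ[ℤ] (1 : R ⧸ I) := by rw [zsmul_eq_mul, mul_comm]
            _ = q ⊗ₜ[ℤ] ((augR r : ℤ) • (1 : R ⧸ I)) := TensorProduct.smul_tmul _ _ _
            _ = q ⊗ₜ[ℤ] (((augR r : ℤ)) : R ⧸ I) := by rw [zsmul_eq_mul, mul_one]
      | add u v hu hv => rw [map_add, TensorProduct.add_tmul, hu, hv]
    have hφψ : ∀ q : ℚ, φ (q ⊗ₜ[ℤ] (1 : R ⧸ I)) = q := by
      intro q
      rw [hφ_tmul]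
      simp
    have hbij : Function.Bijective φ :=
      ⟨fun a b h => by rw [← hψφ a, ← hψφ b, h], fun q => ⟨q ⊗ₜ[ℤ] 1, hφψ q⟩⟩
    let e3 : (ℚ ⊗[ℤ] (R ⧸ I)) ≃+* ℚ := RingEquiv.ofBijective φ.toRingHom hbij
    -- transport along `e1`
    let eA : (R ⊗[A] ℤ) ≃ₐ[ℤ] (R ⧸ I) :=
      AlgEquiv.ofRingEquiv (f := e1) (by
        intro z
        rw [show (algebraMap ℤ (R ⊗[A] ℤ)) z = ((z : ℤ) : R ⊗[A] ℤ) from eq_intCast _ z,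
          map_intCast]
        exact (eq_intCast (algebraMap ℤ (R ⧸ I)) z).symm)
    let e4 := Algebra.TensorProduct.congr (AlgEquiv.refl (R := ℤ) (A₁ := ℚ)) eA
    exact ⟨e4.toRingEquiv.trans e3⟩
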